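/- Let B be an (n-1)×(n-1) nonnegative matrix and E a diagonal matrix with positive diagonal entries e_{ii} ≥ ∑_j b_{ij} for all i, with strict inequality e_{ii} > ∑_j b_{ij} for at least those i in a nonempty set S. Suppose that for every index i there is a path i = i₀, i₁, …, i_m with b_{i_k i_{k+1}} > 0 and i_m ∈ S. Then every eigenvalue λ of E⁻¹B satisfies |λ| < 1. -/

import Mathlib

/-- Spectral lemma: if `B ≥ 0`, `E = diag(e)` with `e_i ≥ ∑_j b_{ij}`, strict on a set `S`
reachable from every index along edges of positive entries of `B`, then every complex
eigenvalue of `E⁻¹B` has modulus strictly less than 1. -/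
theorem stmt_6 (m : ℕ) (B : Matrix (Fin m) (Fin m) ℝ) (e : Fin m → ℝ)
    (hB : ∀ i j, 0 ≤ B i j)
    (hepos : ∀ i, 0 < e i)
    (hdom : ∀ i, ∑ j, B i j ≤ e i)
    (S : Finset (Fin m)) (hS : S.Nonempty)
    (hstrict : ∀ i ∈ S, ∑ j, B i j < e i)
    (hreach : ∀ i, ∃ j ∈ S, Relation.ReflTransGen (fun a b => 0 < B a b) i j)
    (lam : ℂ) (u : Fin m → ℂ) (hu : u ≠ 0)
    (heig : (Matrix.of fun i j => ((B i j / e i : ℝ) : ℂ)).mulVec u = lam • u) :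
    ‖lam‖ < 1 := by
  by_contra hcon
  push_neg at hcon
  have hm : 0 < m := by
    rcases Nat.eq_zero_or_pos m with h | h
    · subst h; exact absurd (funext fun i => i.elim0) hu
    · exact h
  haveI : Nonempty (Fin m) := ⟨⟨0, hm⟩⟩
  set M := Finset.univ.sup' Finset.univ_nonempty (fun i => ‖u i‖) with hM
  have hMle : ∀ i, ‖u i‖ ≤ M := fun i =>
    Finset.le_sup' (fun i => ‖u i‖) (Finset.mem_univ i)
  obtain ⟨i0, -, hi0⟩ :=
    Finset.exists_mem_eq_sup' (Finset.univ_nonempty (α := Fin m)) (fun i => ‖u i‖)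
  have hMpos : 0 < M := by
    rcases lt_or_ge 0 M with h | h
    · exact h
    · exfalso; apply hu; funext i
      have h0 : ‖u i‖ = 0 :=
        le_antisymm ((hMle i).trans h) (norm_nonneg _)
      simpa using norm_eq_zero.mp h0
  have key : ∀ i, ‖u i‖ = M →
      (e i ≤ ∑ j, B i j) ∧ ∀ j, 0 < B i j → ‖u j‖ = M := by
    intro i hi
    have he := congrFun heig i
    simp only [Matrix.mulVec, dotProduct, Matrix.of_apply, Pi.smul_apply,
      smul_eq_mul] at he
    have hMA : M ≤ ∑ j, (B i j / e i) * ‖u j‖ := by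
      calc M = 1 * M := (one_mul M).symm
        _ ≤ ‖lam‖ * ‖u i‖ := by rw [hi]; nlinarith
        _ = ‖lam * u i‖ := (norm_mul lam (u i)).symm
        _ = ‖∑ j, ((B i j / e i : ℝ) : ℂ) * u j‖ := by rw [he]
        _ ≤ ∑ j, ‖((B i j / e i : ℝ) : ℂ) * u j‖ :=
            norm_sum_le _ _
        _ = ∑ j, (B i j / e i) * ‖u j‖ := by
            refine Finset.sum_congr rfl fun j _ => ?_
            rw [norm_mul, Complex.norm_real, Real.norm_of_nonneg
              (div_nonneg (hB i j) (hepos i).le)]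
    have hs : (∑ j, B i j / e i) ≤ 1 := by
      rw [← Finset.sum_div]
      exact div_le_one_of_le₀ (hdom i) (hepos i).le
    have hAle : ∀ j : Fin m, (B i j / e i) * ‖u j‖ ≤ (B i j / e i) * M :=
      fun j => mul_le_mul_of_nonneg_left (hMle j) (div_nonneg (hB i j) (hepos i).le)
    have hsum2 : (∑ j, (B i j / e i) * M) ≤ M := by
      rw [← Finset.sum_mul]
      nlinarith
    constructor
    · -- e i ≤ ∑ B i j
      by_contra hlt
      push_neg at hlt
      have hs' : (∑ j, B i j / e i) < 1 := by
        rw [← Finset.sum_div]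
        exact (div_lt_one (hepos i)).mpr hlt
      have : (∑ j, (B i j / e i) * M) < M := by
        rw [← Finset.sum_mul]; nlinarith
      have h2 : (∑ j, (B i j / e i) * ‖u j‖) ≤ ∑ j, (B i j / e i) * M :=
        Finset.sum_le_sum fun j _ => hAle j
      linarith
    · intro j0 hj0
      by_contra hne
      have hlt : ‖u j0‖ < M := lt_of_le_of_ne (hMle j0) hne
      have hstrictsum : (∑ j, (B i j / e i) * ‖u j‖) < ∑ j, (B i j / e i) * M := by
        refine Finset.sum_lt_sum (fun j _ => hAle j) ⟨j0, Finset.mem_univ j0, ?_⟩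
        exact mul_lt_mul_of_pos_left hlt (div_pos hj0 (hepos i))
      linarith
  have prop : ∀ {a b : Fin m}, Relation.ReflTransGen (fun a b => 0 < B a b) a b →
      ‖u a‖ = M → ‖u b‖ = M := by
    intro a b hab
    induction hab with
    | refl => exact fun h => h
    | tail _ hbc ih => exact fun h => (key _ (ih h)).2 _ hbc
  obtain ⟨j, hjS, hpath⟩ := hreach i0
  have hj : ‖u j‖ = M := prop hpath hi0.symm
  exact absurd ((key j hj).1) (not_le.mpr (hstrict j hjS))
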